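/- Let 0 < p < 1/2 and Π_t be a binomial random variable with parameters t and p, where 1 ≤ n ≤ t. Then P[Π_t < n] ≤ (n / (n-1)!) · t^n · exp(-p t). -/
import Mathlib

lemma aux_fact_choose (i n t : ℕ) (hi : i < n) (hnt : n ≤ t) :
    (n - 1).factorial * t.choose i ≤ t ^ (n - 1) := by
  have h1 : i ≤ n - 1 := by omega
  have h2 : (n - 1) - ((n - 1) - i) = i := by omega
  have hfac : i.factorial * (n - 1).descFactorial (n - 1 - i) = (n - 1).factorial := by
    have := Nat.factorial_mul_descFactorial (n := n - 1) (k := n - 1 - i) (by omega)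
    rwa [h2] at this
  calc (n - 1).factorial * t.choose i
      = (n - 1).descFactorial (n - 1 - i) * (i.factorial * t.choose i) := by
        rw [← hfac]; ring
    _ = (n - 1).descFactorial (n - 1 - i) * t.descFactorial i := by
        rw [Nat.descFactorial_eq_factorial_mul_choose t i]
    _ ≤ (n - 1) ^ (n - 1 - i) * t ^ i :=
        Nat.mul_le_mul (Nat.descFactorial_le_pow _ _) (Nat.descFactorial_le_pow _ _)
    _ ≤ t ^ (n - 1 - i) * t ^ i :=
        Nat.mul_le_mul_right _ (Nat.pow_le_pow_left (by omega) _)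
    _ = t ^ (n - 1) := by rw [← pow_add]; congr 1; omega

open Finset in
/-- The failure-probability bound of Theorem 1: if `Π_t ~ Binomial(t, p)` with
`0 < p < 1/2` and `1 ≤ n ≤ t`, then
`P[Π_t < n] = ∑_{i<n} C(t,i) p^i (1-p)^{t-i} ≤ (n/(n-1)!) t^n exp(-p t)`. -/
theorem stmt_10 (p : ℝ) (hp0 : 0 < p) (hp : p < 1 / 2) (n t : ℕ)
    (hn : 1 ≤ n) (hnt : n ≤ t) :
    ∑ i ∈ range n, (t.choose i : ℝ) * p ^ i * (1 - p) ^ (t - i) ≤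
      ((n : ℝ) / (n - 1).factorial) * (t : ℝ) ^ n * Real.exp (-p * t) := by
  have h1p : (0:ℝ) ≤ 1 - p := by linarith
  have hexp : (1 - p : ℝ) ^ t ≤ Real.exp (-p * t) := by
    calc (1 - p : ℝ) ^ t ≤ Real.exp (-p) ^ t := by
          apply pow_le_pow_left₀ h1p
          linarith [Real.add_one_le_exp (-p)]
      _ = Real.exp (-p * t) := by rw [← Real.exp_nat_mul]; ring_nf
  have hterm : ∀ i ∈ range n, (t.choose i : ℝ) * p ^ i * (1 - p) ^ (t - i) ≤
      ((t : ℝ) ^ (n - 1) / (n - 1).factorial) * Real.exp (-p * t) := by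
    intro i hi
    rw [mem_range] at hi
    have hstep1 : (t.choose i : ℝ) * p ^ i * (1 - p) ^ (t - i) ≤
        (t.choose i : ℝ) * (1 - p) ^ t := by
      have : p ^ i * (1 - p) ^ (t - i) ≤ (1 - p) ^ i * (1 - p) ^ (t - i) := by
        apply mul_le_mul_of_nonneg_right _ (pow_nonneg h1p _)
        exact pow_le_pow_left₀ hp0.le (by linarith) _
      calc (t.choose i : ℝ) * p ^ i * (1 - p) ^ (t - i)
          = (t.choose i : ℝ) * (p ^ i * (1 - p) ^ (t - i)) := by ring
        _ ≤ (t.choose i : ℝ) * ((1 - p) ^ i * (1 - p) ^ (t - i)) := by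
            apply mul_le_mul_of_nonneg_left this (by positivity)
        _ = (t.choose i : ℝ) * (1 - p) ^ t := by
            rw [← pow_add]; congr 2; omega
    have hchoose : (t.choose i : ℝ) ≤ (t : ℝ) ^ (n - 1) / (n - 1).factorial := by
      rw [le_div_iff₀ (by positivity)]
      have := aux_fact_choose i n t hi hnt
      calc (t.choose i : ℝ) * (n - 1).factorial
          = ((n - 1).factorial * t.choose i : ℕ) := by push_cast; ring
        _ ≤ ((t ^ (n - 1) : ℕ) : ℝ) := by exact_mod_cast this
        _ = (t : ℝ) ^ (n - 1) := by push_cast; ring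
    calc (t.choose i : ℝ) * p ^ i * (1 - p) ^ (t - i)
        ≤ (t.choose i : ℝ) * (1 - p) ^ t := hstep1
      _ ≤ ((t : ℝ) ^ (n - 1) / (n - 1).factorial) * Real.exp (-p * t) := by
          apply mul_le_mul hchoose hexp (pow_nonneg h1p _) (by positivity)
  calc ∑ i ∈ range n, (t.choose i : ℝ) * p ^ i * (1 - p) ^ (t - i)
      ≤ ∑ _i ∈ range n, ((t : ℝ) ^ (n - 1) / (n - 1).factorial) * Real.exp (-p * t) :=
        Finset.sum_le_sum hterm
    _ = (n : ℝ) * (((t : ℝ) ^ (n - 1) / (n - 1).factorial) * Real.exp (-p * t)) := by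
        rw [Finset.sum_const, card_range, nsmul_eq_mul]
    _ ≤ ((n : ℝ) / (n - 1).factorial) * (t : ℝ) ^ n * Real.exp (-p * t) := by
        have ht1 : (1:ℝ) ≤ t := by exact_mod_cast hnt.trans' hn
        have hpow : (t : ℝ) ^ (n - 1) ≤ (t : ℝ) ^ n :=
          pow_le_pow_right₀ ht1 (by omega)
        have := mul_le_mul_of_nonneg_right (mul_le_mul_of_nonneg_left hpow
          (by positivity : (0:ℝ) ≤ (n : ℝ) / (n - 1).factorial))
          (Real.exp_nonneg (-p * t))
        calc (n : ℝ) * (((t : ℝ) ^ (n - 1) / (n - 1).factorial) * Real.exp (-p * t))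
            = ((n : ℝ) / (n - 1).factorial) * (t : ℝ) ^ (n-1) * Real.exp (-p * t) := by ring
          _ ≤ _ := this
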